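/- Let f : ℝ² → ℝ² be a C¹ map that equals f₁(x,y) = ((7/6)(x+1), 8(y+1)) on a neighborhood of K₁ = [−13,11] × [−3/2,−1/2] and equals f₂(x,y) = ((7/6)(x−1), 8(y−1)) on a neighborhood of K₂ = [−11,13] × [1/2,3/2]. Then for every C¹ function σ : [−2,2] → (−2,2) with |σ'(t)| < 1/5 for all t, the graph Γ(σ) = {(σ(t), t) : t ∈ [−2,2]} intersects the maximal forward invariant set Λˢ(K₁ ∪ K₂, f) = ⋂_{n≥0} f⁻ⁿ(K₁ ∪ K₂). -/

import Mathlib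

open Set

/-! Auxiliary construction for the blender argument. -/

open Classical in
/-- Sign choice: `-1` means use the lower rectangle `K₁`, `1` the upper `K₂`. -/
noncomputable def blEps (g : ℝ → ℝ) : ℝ :=
  if ∀ y ∈ Icc (-(5:ℝ)/4) (-(3:ℝ)/4), g y < 5/7 then -1 else 1

/-- The renormalized graph after one application of `f` on the chosen rectangle. -/
noncomputable def blNxt (g : ℝ → ℝ) : ℝ → ℝ :=
  fun s => 7/6 * (g (blEps g + s/8) - blEps g)

/-- Sequence of renormalized graphs. -/
noncomputable def blG (σ : ℝ → ℝ) : ℕ → ℝ → ℝ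
  | 0 => σ
  | n+1 => blNxt (blG σ n)

/-- `blS σ m n s` : the parameter at stage `m` whose `n`-step future parameter is `s`. -/
noncomputable def blS (σ : ℝ → ℝ) : ℕ → ℕ → ℝ → ℝ
  | _, 0, s => s
  | m, n+1, s => blEps (blG σ m) + (blS σ (m+1) n s) / 8

/-- Invariant: graph maps `[-2,2]` into `(-2,2)` and is `1/5`-Lipschitz there. -/
def blInv (g : ℝ → ℝ) : Prop :=
  (∀ s ∈ Icc (-2:ℝ) 2, g s ∈ Ioo (-2:ℝ) 2) ∧
  ∀ s ∈ Icc (-2:ℝ) 2, ∀ u ∈ Icc (-2:ℝ) 2, |g s - g u| ≤ |s - u| / 5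

lemma blEps_cases (g : ℝ → ℝ) : blEps g = -1 ∨ blEps g = 1 := by
  unfold blEps; split <;> simp

lemma blEps_mem {g : ℝ → ℝ} {y : ℝ}
    (hy : y ∈ Icc (blEps g - 1/4) (blEps g + 1/4)) : y ∈ Icc (-2:ℝ) 2 := by
  rcases blEps_cases g with h | h <;> rw [h] at hy <;>
    exact ⟨by linarith [hy.1], by linarith [hy.2]⟩

lemma blKey {g : ℝ → ℝ} (hg : blInv g) {y : ℝ}
    (hy : y ∈ Icc (blEps g - 1/4) (blEps g + 1/4)) :
    7/6 * (g y - blEps g) ∈ Ioo (-2:ℝ) 2 := by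
  have hy2 : y ∈ Icc (-2:ℝ) 2 := blEps_mem hy
  have hv := hg.1 y hy2
  by_cases h : ∀ z ∈ Icc (-(5:ℝ)/4) (-(3:ℝ)/4), g z < 5/7
  · have he : blEps g = -1 := by unfold blEps; exact if_pos h
    rw [he] at hy ⊢
    have hyI : y ∈ Icc (-(5:ℝ)/4) (-(3:ℝ)/4) :=
      ⟨by linarith [hy.1], by linarith [hy.2]⟩
    have := h y hyI
    exact ⟨by linarith [hv.1], by linarith⟩
  · have he : blEps g = 1 := by unfold blEps; exact if_neg h
    rw [he] at hy ⊢
    push_neg at h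
    obtain ⟨y₀, hy₀, hge⟩ := h
    have hy₀2 : y₀ ∈ Icc (-2:ℝ) 2 := ⟨by linarith [hy₀.1], by linarith [hy₀.2]⟩
    have hlip := hg.2 y hy2 y₀ hy₀2
    have habs : |y - y₀| ≤ 5/2 := by
      rw [abs_le]
      exact ⟨by linarith [hy.1, hy₀.2], by linarith [hy.2, hy₀.1]⟩
    have h1 : |g y - g y₀| ≤ 1/2 := by linarith
    have h2 := abs_le.1 h1
    exact ⟨by linarith [h2.1], by linarith [hv.2]⟩

lemma blInv_nxt {g : ℝ → ℝ} (hg : blInv g) : blInv (blNxt g) := by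
  constructor
  · intro s hs
    have hy : blEps g + s/8 ∈ Icc (blEps g - 1/4) (blEps g + 1/4) :=
      ⟨by linarith [hs.1], by linarith [hs.2]⟩
    exact blKey hg hy
  · intro s hs u hu
    have hys : blEps g + s/8 ∈ Icc (blEps g - 1/4) (blEps g + 1/4) :=
      ⟨by linarith [hs.1], by linarith [hs.2]⟩
    have hyu : blEps g + u/8 ∈ Icc (blEps g - 1/4) (blEps g + 1/4) :=
      ⟨by linarith [hu.1], by linarith [hu.2]⟩
    have h1 : blEps g + s/8 ∈ Icc (-2:ℝ) 2 := blEps_mem hys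
    have h2 : blEps g + u/8 ∈ Icc (-2:ℝ) 2 := blEps_mem hyu
    have hlip := hg.2 _ h1 _ h2
    have heq : (blEps g + s/8) - (blEps g + u/8) = (s-u)/8 := by ring
    rw [heq] at hlip
    have h8 : |(s-u)/8| = |s-u|/8 := by
      rw [abs_div]; norm_num
    rw [h8] at hlip
    unfold blNxt
    have heq2 : 7/6 * (g (blEps g + s/8) - blEps g) - 7/6 * (g (blEps g + u/8) - blEps g)
        = 7/6 * (g (blEps g + s/8) - g (blEps g + u/8)) := by ring
    rw [heq2, abs_mul]
    have h76 : |(7:ℝ)/6| = 7/6 := by norm_num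
    rw [h76]
    have := abs_nonneg (s - u)
    nlinarith [abs_nonneg (g (blEps g + s/8) - g (blEps g + u/8))]

lemma blInv_G {σ : ℝ → ℝ} (h : blInv σ) : ∀ n, blInv (blG σ n) := by
  intro n
  induction n with
  | zero => exact h
  | succ n ih => exact blInv_nxt ih

lemma blS_mem (σ : ℝ → ℝ) : ∀ n m (s : ℝ), s ∈ Icc (-2:ℝ) 2 →
    blS σ m n s ∈ Icc (-2:ℝ) 2 := by
  intro n
  induction n with
  | zero => intro m s hs; exact hs
  | succ n ih =>
    intro m s hs
    have hu := ih (m+1) s hs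
    show blEps (blG σ m) + (blS σ (m+1) n s) / 8 ∈ Icc (-2:ℝ) 2
    have hy : blEps (blG σ m) + (blS σ (m+1) n s) / 8 ∈
        Icc (blEps (blG σ m) - 1/4) (blEps (blG σ m) + 1/4) :=
      ⟨by linarith [hu.1], by linarith [hu.2]⟩
    exact blEps_mem hy

/-- The 'blender Cantor set' in `ℝ²`: every nearly-vertical C¹ graph
`Γ(σ) = {(σ t, t) : t ∈ [-2,2]}` with `|σ'| < 1/5` meets the maximal forward
invariant set `Λˢ(K₁ ∪ K₂, f)`. -/
theorem stmt6 (f : ℝ × ℝ → ℝ × ℝ) (hf : ContDiff ℝ 1 f)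
    (h1 : ∃ U : Set (ℝ × ℝ), IsOpen U ∧
      (Icc (-13 : ℝ) 11 ×ˢ Icc (-(3 : ℝ)/2) (-(1 : ℝ)/2)) ⊆ U ∧
      ∀ q ∈ U, f q = ((7/6) * (q.1 + 1), 8 * (q.2 + 1)))
    (h2 : ∃ U : Set (ℝ × ℝ), IsOpen U ∧
      (Icc (-11 : ℝ) 13 ×ˢ Icc ((1 : ℝ)/2) ((3 : ℝ)/2)) ⊆ U ∧
      ∀ q ∈ U, f q = ((7/6) * (q.1 - 1), 8 * (q.2 - 1)))
    (σ : ℝ → ℝ) (hσ : ContDiff ℝ 1 σ)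
    (hσmem : ∀ t ∈ Icc (-2 : ℝ) 2, σ t ∈ Ioo (-2 : ℝ) 2)
    (hσd : ∀ t ∈ Icc (-2 : ℝ) 2, |deriv σ t| < 1/5) :
    ∃ t ∈ Icc (-2 : ℝ) 2, ∀ n : ℕ, f^[n] (σ t, t) ∈
      (Icc (-13 : ℝ) 11 ×ˢ Icc (-(3 : ℝ)/2) (-(1 : ℝ)/2)) ∪
      (Icc (-11 : ℝ) 13 ×ˢ Icc ((1 : ℝ)/2) ((3 : ℝ)/2)) := by
  obtain ⟨U₁, hU₁o, hKU₁, hfU₁⟩ := h1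
  obtain ⟨U₂, hU₂o, hKU₂, hfU₂⟩ := h2
  set K : Set (ℝ × ℝ) :=
    (Icc (-13 : ℝ) 11 ×ˢ Icc (-(3 : ℝ)/2) (-(1 : ℝ)/2)) ∪
      (Icc (-11 : ℝ) 13 ×ˢ Icc ((1 : ℝ)/2) ((3 : ℝ)/2)) with hK
  -- base invariant
  have hInv0 : blInv σ := by
    refine ⟨hσmem, fun s hs u hu => ?_⟩
    have hd : ∀ x ∈ Icc (-2:ℝ) 2, DifferentiableAt ℝ σ x :=
      fun x _ => (hσ.differentiable one_ne_zero).differentiableAt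
    have hb : ∀ x ∈ Icc (-2:ℝ) 2, ‖deriv σ x‖ ≤ 1/5 := by
      intro x hx
      rw [Real.norm_eq_abs]
      exact (hσd x hx).le
    have := Convex.norm_image_sub_le_of_norm_deriv_le hd hb (convex_Icc _ _) hu hs
    rw [Real.norm_eq_abs, Real.norm_eq_abs] at this
    linarith
  have hInvG : ∀ n, blInv (blG σ n) := blInv_G hInv0
  -- one step of the dynamics
  have hstep : ∀ m (u : ℝ), u ∈ Icc (-2:ℝ) 2 →
      (blG σ m (blEps (blG σ m) + u/8), blEps (blG σ m) + u/8) ∈ K ∧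
      f (blG σ m (blEps (blG σ m) + u/8), blEps (blG σ m) + u/8)
        = (blG σ (m+1) u, u) := by
    intro m u hu
    have hy : blEps (blG σ m) + u/8 ∈
        Icc (blEps (blG σ m) - 1/4) (blEps (blG σ m) + 1/4) :=
      ⟨by linarith [hu.1], by linarith [hu.2]⟩
    have hy2 : blEps (blG σ m) + u/8 ∈ Icc (-2:ℝ) 2 := blEps_mem hy
    have hx := (hInvG m).1 _ hy2
    have hGsucc : blG σ (m+1) u
        = 7/6 * (blG σ m (blEps (blG σ m) + u/8) - blEps (blG σ m)) := rfl
    rcases blEps_cases (blG σ m) with he | he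
    · have hmem : (blG σ m (blEps (blG σ m) + u/8), blEps (blG σ m) + u/8) ∈
          Icc (-13 : ℝ) 11 ×ˢ Icc (-(3 : ℝ)/2) (-(1 : ℝ)/2) := by
        rw [he] at hy hx ⊢
        exact Set.mk_mem_prod ⟨by linarith [hx.1], by linarith [hx.2]⟩
          ⟨by linarith [hy.1], by linarith [hy.2]⟩
      refine ⟨Or.inl hmem, ?_⟩
      rw [hfU₁ _ (hKU₁ hmem), hGsucc, he]
      dsimp only
      simp only [Prod.mk.injEq]
      constructor <;> ring
    · have hmem : (blG σ m (blEps (blG σ m) + u/8), blEps (blG σ m) + u/8) ∈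
          Icc (-11 : ℝ) 13 ×ˢ Icc ((1 : ℝ)/2) ((3 : ℝ)/2) := by
        rw [he] at hy hx ⊢
        exact Set.mk_mem_prod ⟨by linarith [hx.1], by linarith [hx.2]⟩
          ⟨by linarith [hy.1], by linarith [hy.2]⟩
      refine ⟨Or.inr hmem, ?_⟩
      rw [hfU₂ _ (hKU₂ hmem), hGsucc, he]
      dsimp only
      simp only [Prod.mk.injEq]
      exact ⟨trivial, by ring⟩
  -- iterates of points obtained by pulling back the parameter
  have main : ∀ n m (s : ℝ), s ∈ Icc (-2:ℝ) 2 →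
      f^[n] (blG σ m (blS σ m n s), blS σ m n s) = (blG σ (m+n) s, s) ∧
      ∀ k, k < n → f^[k] (blG σ m (blS σ m n s), blS σ m n s) ∈ K := by
    intro n
    induction n with
    | zero =>
      intro m s hs
      exact ⟨by simp [blS], fun k hk => absurd hk (Nat.not_lt_zero k)⟩
    | succ n ih =>
      intro m s hs
      have hu : blS σ (m+1) n s ∈ Icc (-2:ℝ) 2 := blS_mem σ n (m+1) s hs
      have hS : blS σ m (n+1) s
          = blEps (blG σ m) + (blS σ (m+1) n s)/8 := rfl
      obtain ⟨hmem, hfp⟩ := hstep m (blS σ (m+1) n s) hu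
      obtain ⟨ihe, ihm⟩ := ih (m+1) s hs
      have harith : m + 1 + n = m + (n + 1) := by omega
      rw [harith] at ihe
      constructor
      · rw [Function.iterate_succ_apply, hS, hfp, ihe]
      · intro k hk
        match k with
        | 0 =>
          rw [Function.iterate_zero_apply, hS]
          exact hmem
        | (k+1) =>
          rw [Function.iterate_succ_apply, hS, hfp]
          exact ihm k (by omega)
  -- nested nonempty compact sets
  set C : ℕ → Set ℝ := fun n =>
    {t ∈ Icc (-2:ℝ) 2 | ∀ k, k < n → f^[k] (σ t, t) ∈ K} with hC
  have hKcl : IsClosed K :=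
    (isClosed_Icc.prod isClosed_Icc).union (isClosed_Icc.prod isClosed_Icc)
  have hcont : ∀ k : ℕ, Continuous fun t : ℝ => f^[k] (σ t, t) := by
    intro k
    exact (hf.continuous.iterate k).comp (hσ.continuous.prodMk continuous_id)
  have hclosed : ∀ n, IsClosed (C n) := by
    intro n
    have : C n = Icc (-2:ℝ) 2 ∩ ⋂ k ∈ Finset.range n,
        (fun t : ℝ => f^[k] (σ t, t)) ⁻¹' K := by
      ext t
      simp only [hC, mem_sep_iff, mem_inter_iff, mem_iInter, mem_preimage,
        Finset.mem_range]
    rw [this]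
    exact isClosed_Icc.inter (isClosed_biInter fun k _ => hKcl.preimage (hcont k))
  have hne : ∀ n, (C n).Nonempty := by
    intro n
    refine ⟨blS σ 0 n 0, blS_mem σ n 0 0 (by norm_num), ?_⟩
    intro k hk
    have := (main n 0 0 (by norm_num)).2 k hk
    exact this
  have hsub : ∀ n, C (n+1) ⊆ C n := by
    intro n t ht
    exact ⟨ht.1, fun k hk => ht.2 k (by omega)⟩
  have hcpt : IsCompact (C 0) :=
    IsCompact.of_isClosed_subset isCompact_Icc (hclosed 0) (fun t ht => ht.1)
  obtain ⟨t, ht⟩ :=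
    IsCompact.nonempty_iInter_of_sequence_nonempty_isCompact_isClosed C hsub hne
      hcpt hclosed
  have htall : ∀ n, t ∈ C n := mem_iInter.1 ht
  refine ⟨t, (htall 0).1, fun n => ?_⟩
  exact (htall (n+1)).2 n (by omega)
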